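/- Let A, B be one-variable formal power series and P a q-variable formal power series, all over ℝ with nonnegative coefficients. If A∘P and B∘P exist, then (AB)∘P exists and (A∘P)(B∘P) = (AB)∘P. -/

import Mathlib

open Filter Finset

set_option maxHeartbeats 1000000

lemma mv_pow_coeff_nonneg {q : ℕ} (P : MvPowerSeries (Fin q) ℝ)
    (hP : ∀ c : Fin q →₀ ℕ, 0 ≤ MvPowerSeries.coeff c P) (n : ℕ) :
    ∀ c : Fin q →₀ ℕ, 0 ≤ MvPowerSeries.coeff c (P ^ n) := by
  induction n with
  | zero =>
    intro c
    rw [pow_zero, MvPowerSeries.coeff_one]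
    split <;> norm_num
  | succ n ih =>
    intro c
    rw [pow_succ, MvPowerSeries.coeff_mul]
    exact Finset.sum_nonneg fun p _ => mul_nonneg (ih p.1) (hP p.2)

theorem mv_right_distributive_law_nonneg {q : ℕ}
    (A B : PowerSeries ℝ) (P : MvPowerSeries (Fin q) ℝ)
    (hA : ∀ n, 0 ≤ PowerSeries.coeff n A)
    (hB : ∀ n, 0 ≤ PowerSeries.coeff n B)
    (hP : ∀ c : Fin q →₀ ℕ, 0 ≤ MvPowerSeries.coeff c P)
    (FA FB : (Fin q →₀ ℕ) → ℝ)
    (hAP : ∀ c, Tendsto (fun N => ∑ n ∈ Finset.range N,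
      PowerSeries.coeff n A * MvPowerSeries.coeff c (P ^ n)) atTop (nhds (FA c)))
    (hBP : ∀ c, Tendsto (fun N => ∑ n ∈ Finset.range N,
      PowerSeries.coeff n B * MvPowerSeries.coeff c (P ^ n)) atTop (nhds (FB c))) :
    ∃ FC : (Fin q →₀ ℕ) → ℝ,
      (∀ c, Tendsto (fun N => ∑ n ∈ Finset.range N,
        PowerSeries.coeff n (A * B) * MvPowerSeries.coeff c (P ^ n)) atTop (nhds (FC c)))
      ∧ ∀ c : Fin q →₀ ℕ, ∑ p ∈ Finset.HasAntidiagonal.antidiagonal c, FA p.1 * FB p.2 = FC c := by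
  have hQ := mv_pow_coeff_nonneg P hP
  -- HasSum versions of the hypotheses
  have hA' : ∀ c, HasSum (fun n => PowerSeries.coeff n A * MvPowerSeries.coeff c (P ^ n))
      (FA c) := fun c =>
    (hasSum_iff_tendsto_nat_of_nonneg (fun n => mul_nonneg (hA n) (hQ n c)) _).mpr (hAP c)
  have hB' : ∀ c, HasSum (fun n => PowerSeries.coeff n B * MvPowerSeries.coeff c (P ^ n))
      (FB c) := fun c =>
    (hasSum_iff_tendsto_nat_of_nonneg (fun n => mul_nonneg (hB n) (hQ n c)) _).mpr (hBP c)
  -- summability of the product families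
  have hprod : ∀ d e : Fin q →₀ ℕ, Summable (fun x : ℕ × ℕ =>
      (PowerSeries.coeff x.1 A * MvPowerSeries.coeff d (P ^ x.1)) *
      (PowerSeries.coeff x.2 B * MvPowerSeries.coeff e (P ^ x.2))) := by
    intro d e
    apply summable_mul_of_summable_norm (f := fun n =>
        PowerSeries.coeff n A * MvPowerSeries.coeff d (P ^ n))
      (g := fun n => PowerSeries.coeff n B * MvPowerSeries.coeff e (P ^ n))
    · refine ((hA' d).summable).congr fun n => ?_
      rw [Real.norm_of_nonneg (mul_nonneg (hA n) (hQ n d))]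
    · refine ((hB' e).summable).congr fun n => ?_
      rw [Real.norm_of_nonneg (mul_nonneg (hB n) (hQ n e))]
  -- per-pair Cauchy product
  have hcauchy : ∀ d e : Fin q →₀ ℕ, FA d * FB e = ∑' n, ∑ kl ∈ Finset.HasAntidiagonal.antidiagonal n,
      (PowerSeries.coeff kl.1 A * MvPowerSeries.coeff d (P ^ kl.1)) *
      (PowerSeries.coeff kl.2 B * MvPowerSeries.coeff e (P ^ kl.2)) := by
    intro d e
    rw [← (hA' d).tsum_eq, ← (hB' e).tsum_eq]
    exact Summable.tsum_mul_tsum_eq_tsum_sum_antidiagonal (hA' d).summable (hB' e).summable (hprod d e)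
  have hsummable : ∀ d e : Fin q →₀ ℕ, Summable (fun n => ∑ kl ∈ Finset.HasAntidiagonal.antidiagonal n,
      (PowerSeries.coeff kl.1 A * MvPowerSeries.coeff d (P ^ kl.1)) *
      (PowerSeries.coeff kl.2 B * MvPowerSeries.coeff e (P ^ kl.2))) := by
    intro d e
    exact summable_sum_mul_antidiagonal_of_summable_mul
      (f := fun n => PowerSeries.coeff n A * MvPowerSeries.coeff d (P ^ n))
      (g := fun n => PowerSeries.coeff n B * MvPowerSeries.coeff e (P ^ n)) (hprod d e)
  -- key pointwise identity
  have hkey : ∀ (c : Fin q →₀ ℕ) (n : ℕ),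
      ∑ p ∈ Finset.HasAntidiagonal.antidiagonal c, ∑ kl ∈ Finset.HasAntidiagonal.antidiagonal n,
        (PowerSeries.coeff kl.1 A * MvPowerSeries.coeff p.1 (P ^ kl.1)) *
        (PowerSeries.coeff kl.2 B * MvPowerSeries.coeff p.2 (P ^ kl.2)) =
      PowerSeries.coeff n (A * B) * MvPowerSeries.coeff c (P ^ n) := by
    intro c n
    rw [Finset.sum_comm]
    rw [PowerSeries.coeff_mul, Finset.sum_mul]
    refine Finset.sum_congr rfl fun kl hkl => ?_
    have hn : kl.1 + kl.2 = n := Finset.HasAntidiagonal.mem_antidiagonal.mp hkl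
    have : MvPowerSeries.coeff c (P ^ n) =
        ∑ p ∈ Finset.HasAntidiagonal.antidiagonal c,
          MvPowerSeries.coeff p.1 (P ^ kl.1) * MvPowerSeries.coeff p.2 (P ^ kl.2) := by
      rw [← MvPowerSeries.coeff_mul, ← pow_add, hn]
    rw [this, Finset.mul_sum]
    exact Finset.sum_congr rfl fun p _ => by ring
  refine ⟨fun c => ∑ p ∈ Finset.HasAntidiagonal.antidiagonal c, FA p.1 * FB p.2, fun c => ?_, fun c => rfl⟩
  -- show HasSum of the target series to the claimed value
  have hswap : ∑ p ∈ Finset.HasAntidiagonal.antidiagonal c, FA p.1 * FB p.2 =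
      ∑' n, PowerSeries.coeff n (A * B) * MvPowerSeries.coeff c (P ^ n) := by
    calc ∑ p ∈ Finset.HasAntidiagonal.antidiagonal c, FA p.1 * FB p.2
        = ∑ p ∈ Finset.HasAntidiagonal.antidiagonal c, ∑' n, ∑ kl ∈ Finset.HasAntidiagonal.antidiagonal n,
            (PowerSeries.coeff kl.1 A * MvPowerSeries.coeff p.1 (P ^ kl.1)) *
            (PowerSeries.coeff kl.2 B * MvPowerSeries.coeff p.2 (P ^ kl.2)) :=
          Finset.sum_congr rfl fun p _ => hcauchy p.1 p.2
      _ = ∑' n, ∑ p ∈ Finset.HasAntidiagonal.antidiagonal c, ∑ kl ∈ Finset.HasAntidiagonal.antidiagonal n,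
            (PowerSeries.coeff kl.1 A * MvPowerSeries.coeff p.1 (P ^ kl.1)) *
            (PowerSeries.coeff kl.2 B * MvPowerSeries.coeff p.2 (P ^ kl.2)) :=
          (Summable.tsum_finsetSum (f := fun (p : (Fin q →₀ ℕ) × (Fin q →₀ ℕ)) n =>
            ∑ kl ∈ Finset.HasAntidiagonal.antidiagonal n,
              (PowerSeries.coeff kl.1 A * MvPowerSeries.coeff p.1 (P ^ kl.1)) *
              (PowerSeries.coeff kl.2 B * MvPowerSeries.coeff p.2 (P ^ kl.2)))
            fun p _ => hsummable p.1 p.2).symm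
      _ = ∑' n, PowerSeries.coeff n (A * B) * MvPowerSeries.coeff c (P ^ n) := by
          exact tsum_congr fun n => hkey c n
  have hsum2 : Summable (fun n => PowerSeries.coeff n (A * B) *
      MvPowerSeries.coeff c (P ^ n)) := by
    have : Summable (fun n => ∑ p ∈ Finset.HasAntidiagonal.antidiagonal c, ∑ kl ∈ Finset.HasAntidiagonal.antidiagonal n,
        (PowerSeries.coeff kl.1 A * MvPowerSeries.coeff p.1 (P ^ kl.1)) *
        (PowerSeries.coeff kl.2 B * MvPowerSeries.coeff p.2 (P ^ kl.2))) :=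
      (hasSum_sum (f := fun (p : (Fin q →₀ ℕ) × (Fin q →₀ ℕ)) n =>
          ∑ kl ∈ Finset.HasAntidiagonal.antidiagonal n,
            (PowerSeries.coeff kl.1 A * MvPowerSeries.coeff p.1 (P ^ kl.1)) *
            (PowerSeries.coeff kl.2 B * MvPowerSeries.coeff p.2 (P ^ kl.2)))
        fun p _ => (hsummable p.1 p.2).hasSum).summable
    exact this.congr fun n => hkey c n
  have hnn : ∀ n, 0 ≤ PowerSeries.coeff n (A * B) * MvPowerSeries.coeff c (P ^ n) := by
    intro n
    refine mul_nonneg ?_ (hQ n c)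
    rw [PowerSeries.coeff_mul]
    exact Finset.sum_nonneg fun p _ => mul_nonneg (hA p.1) (hB p.2)
  have := (hasSum_iff_tendsto_nat_of_nonneg hnn _).mp (hswap ▸ hsum2.hasSum)
  exact this
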